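/- Let x ∈ ℝⁿ and δ > 0. Suppose f : ℝⁿ → ℝ is differentiable with L-Lipschitz continuous gradient, m : ℝⁿ → ℝ is differentiable at x, the curvature bound |m(x+s) − m(x) − ⟨∇m(x), s⟩| ≤ ((κ_bmh − 1)/2)·‖s‖² holds for all s with ‖s‖ ≤ δ, and the gradient-accuracy bound ‖∇m(x) − ∇f(x)‖ ≤ κ_grad·δ holds. Then for every s ∈ ℝⁿ with ‖s‖ ≤ δ, f(x+s) − m(x+s) − f(x) + m(x) ≤ 2·κ_val·δ², where κ_val := (L + κ_bmh + 2·κ_grad)/4. -/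

import Mathlib

open RealInnerProductSpace

lemma descent_aux {n : ℕ} (L : ℝ) (f : EuclideanSpace ℝ (Fin n) → ℝ)
    (hf : Differentiable ℝ f)
    (hflip : ∀ a b : EuclideanSpace ℝ (Fin n),
      ‖gradient f b - gradient f a‖ ≤ L * ‖b - a‖)
    (x s : EuclideanSpace ℝ (Fin n)) :
    f (x + s) - f x - ⟪gradient f x, s⟫ ≤ L / 2 * ‖s‖ ^ 2 := by
  set g : ℝ → ℝ := fun t => f (x + t • s) with hg
  have hline : ∀ t : ℝ, HasDerivAt (fun t : ℝ => x + t • s) s t := by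
    intro t
    simpa using ((hasDerivAt_id t).smul_const s).const_add x
  have hderiv : ∀ t : ℝ, HasDerivAt g ⟪gradient f (x + t • s), s⟫ t := by
    intro t
    have h1 := ((hf (x + t • s)).hasGradientAt).hasFDerivAt
    have := h1.comp_hasDerivAt t (hline t)
    simpa [hg, Function.comp_def] using this
  have hgradcont : Continuous (gradient f) := by
      rcases le_or_gt L 0 with hL | hL
      · have : ∀ a b, gradient f b = gradient f a := by
          intro a b
          have := hflip a b
          have h2 : L * ‖b - a‖ ≤ 0 := mul_nonpos_of_nonpos_of_nonneg hL (norm_nonneg _)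
          have := le_trans this h2
          have := le_antisymm this (norm_nonneg _)
          rwa [norm_eq_zero, sub_eq_zero] at this
        have : gradient f = fun _ => gradient f 0 := funext fun b => this 0 b
        rw [this]; exact continuous_const
      · have : LipschitzWith (Real.toNNReal L) (gradient f) := by
          apply LipschitzWith.of_dist_le_mul
          intro a b
          rw [dist_eq_norm]
          calc ‖gradient f a - gradient f b‖ ≤ L * ‖a - b‖ := hflip b a
            _ = (Real.toNNReal L : ℝ) * dist a b := by
                rw [Real.coe_toNNReal _ hL.le, dist_eq_norm]
        exact this.continuous
  have hcont : Continuous fun t : ℝ => ⟪gradient f (x + t • s), s⟫ :=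
    (hgradcont.comp (by continuity)).inner continuous_const
  have hcont2 : Continuous fun t : ℝ => ⟪gradient f (x + t • s) - gradient f x, s⟫ :=
    ((hgradcont.comp (by continuity)).sub continuous_const).inner continuous_const
  have hFTC : f (x + s) - f x = ∫ t in (0:ℝ)..1, ⟪gradient f (x + t • s), s⟫ := by
    have := intervalIntegral.integral_eq_sub_of_hasDerivAt
      (f := g) (f' := fun t => ⟪gradient f (x + t • s), s⟫)
      (fun t _ => hderiv t) (hcont.intervalIntegrable 0 1)
    rw [this]; simp [hg]
  have key : f (x + s) - f x - ⟪gradient f x, s⟫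
      = ∫ t in (0:ℝ)..1, ⟪gradient f (x + t • s) - gradient f x, s⟫ := by
    rw [hFTC]
    simp_rw [inner_sub_left]
    rw [intervalIntegral.integral_sub (hcont.intervalIntegrable 0 1)
      (intervalIntegrable_const (c := ⟪gradient f x, s⟫))]
    simp
  rw [key]
  have hbound : ∫ t in (0:ℝ)..1, ⟪gradient f (x + t • s) - gradient f x, s⟫
      ≤ ∫ t in (0:ℝ)..1, L * t * ‖s‖ ^ 2 := by
    apply intervalIntegral.integral_mono_on (by norm_num)
    · exact hcont2.intervalIntegrable 0 1
    · exact (by fun_prop : Continuous fun t : ℝ => L * t * ‖s‖ ^ 2).intervalIntegrable 0 1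
    · intro t ht
      calc ⟪gradient f (x + t • s) - gradient f x, s⟫
          ≤ ‖gradient f (x + t • s) - gradient f x‖ * ‖s‖ := real_inner_le_norm _ _
        _ ≤ (L * ‖(x + t • s) - x‖) * ‖s‖ := by
            apply mul_le_mul_of_nonneg_right (hflip x (x + t • s)) (norm_nonneg _)
        _ = L * t * ‖s‖ ^ 2 := by
            rw [add_sub_cancel_left, norm_smul, Real.norm_eq_abs, abs_of_nonneg ht.1]
            ring
  calc _ ≤ ∫ t in (0:ℝ)..1, L * t * ‖s‖ ^ 2 := hbound
    _ = L / 2 * ‖s‖ ^ 2 := by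
        rw [intervalIntegral.integral_mul_const, intervalIntegral.integral_const_mul,
          integral_id]
        ring

theorem stmt_0 {n : ℕ} (x : EuclideanSpace ℝ (Fin n)) (δ L κbmh κgrad : ℝ)
    (hδ : 0 < δ) (hL : 0 < L) (hκbmh : 1 ≤ κbmh) (hκgrad : 0 < κgrad)
    (f m : EuclideanSpace ℝ (Fin n) → ℝ)
    (hf : Differentiable ℝ f)
    (hflip : ∀ a b : EuclideanSpace ℝ (Fin n),
      ‖gradient f b - gradient f a‖ ≤ L * ‖b - a‖)
    (hm : DifferentiableAt ℝ m x)
    (hcurv : ∀ s : EuclideanSpace ℝ (Fin n), ‖s‖ ≤ δ →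
      |m (x + s) - m x - ⟪gradient m x, s⟫| ≤ ((κbmh - 1) / 2) * ‖s‖ ^ 2)
    (hgrad : ‖gradient m x - gradient f x‖ ≤ κgrad * δ) :
    ∀ s : EuclideanSpace ℝ (Fin n), ‖s‖ ≤ δ →
      f (x + s) - m (x + s) - f x + m x ≤
        2 * ((L + κbmh + 2 * κgrad) / 4) * δ ^ 2 := by
  intro s hs
  have h1 := descent_aux L f hf hflip x s
  have h2 := hcurv s hs
  have h3 : -(((κbmh - 1) / 2) * ‖s‖ ^ 2) ≤ m (x + s) - m x - ⟪gradient m x, s⟫ :=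
    neg_le_of_abs_le h2
  have h4 : ⟪gradient f x - gradient m x, s⟫ ≤ κgrad * δ * δ := by
    calc ⟪gradient f x - gradient m x, s⟫ ≤ ‖gradient f x - gradient m x‖ * ‖s‖ :=
          real_inner_le_norm _ _
      _ ≤ (κgrad * δ) * δ := by
          apply mul_le_mul _ hs (norm_nonneg _) (by positivity)
          rwa [← norm_neg, neg_sub]
  have hs2 : ‖s‖ ^ 2 ≤ δ ^ 2 := by
    apply sq_le_sq' _ hs
    linarith [norm_nonneg s]
  have hfs : f (x + s) - f x ≤ ⟪gradient f x, s⟫ + L / 2 * ‖s‖ ^ 2 := by linarith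
  have hms : ⟪gradient m x, s⟫ - ((κbmh - 1) / 2) * ‖s‖ ^ 2 ≤ m (x + s) - m x := by linarith
  have hsplit : ⟪gradient f x, s⟫ - ⟪gradient m x, s⟫ = ⟪gradient f x - gradient m x, s⟫ := by
    rw [inner_sub_left]
  nlinarith [hs2, sq_nonneg δ, hκgrad.le, hδ.le]
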